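/- For every positive integer p, every nonconstant function f : ℕ^(p) → ℕ^(p) fixes an intersection; that is, there exist distinct p-element subsets x, y of ℕ with |f(x) ∩ f(y)| = |x ∩ y|. -/

import Mathlib

open Set Finset Classical

lemma myRamsey (n : ℕ) : ∀ (S : Set ℕ), S.Infinite →
    ∀ (χ : Finset ℕ → Finset ℕ) (K₀ : Finset (Finset ℕ)),
    (∀ C : Finset ℕ, ↑C ⊆ S → C.card = n → χ C ∈ K₀) →
    ∃ M : Set ℕ, M ⊆ S ∧ M.Infinite ∧ ∃ c : Finset ℕ,
      ∀ C : Finset ℕ, ↑C ⊆ M → C.card = n → χ C = c := by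
  induction n with
  | zero =>
    intro S hS χ K₀ _
    refine ⟨S, subset_rfl, hS, χ ∅, ?_⟩
    intro C _ hC
    rw [Finset.card_eq_zero] at hC
    rw [hC]
  | succ n ih =>
    intro S hS χ K₀ hK
    -- step function
    have key : ∀ M : Set ℕ, M ⊆ S → M.Infinite →
        ∃ (a : ℕ) (M' : Set ℕ) (c : Finset ℕ), a ∈ M ∧ M' ⊆ M \ {a} ∧ M'.Infinite ∧ c ∈ K₀ ∧
          ∀ C : Finset ℕ, ↑C ⊆ M' → C.card = n → χ (insert a C) = c := by
      intro M hMS hM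
      obtain ⟨a, ha⟩ := hM.nonempty
      have hMa : (M \ {a}).Infinite := hM.diff (Set.finite_singleton a)
      have hhyp : ∀ C : Finset ℕ, ↑C ⊆ M \ {a} → C.card = n → χ (insert a C) ∈ K₀ := by
        intro C hCsub hCcard
        have haC : a ∉ C := by
          intro hmem
          have := hCsub hmem
          simp at this
        have hsub : ↑(insert a C) ⊆ S := by
          intro x hx
          simp only [Finset.coe_insert, Set.mem_insert_iff] at hx
          rcases hx with rfl | hx
          · exact hMS ha
          · exact hMS ((hCsub hx).1)
        have hcard2 : (insert a C).card = n + 1 := by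
          rw [Finset.card_insert_of_notMem haC, hCcard]
        exact hK _ hsub hcard2
      obtain ⟨M', hM'sub, hM'inf, c, hc⟩ := ih (M \ {a}) hMa (fun C => χ (insert a C)) K₀ hhyp
      have hcK₀ : c ∈ K₀ := by
        obtain ⟨C₀, hC₀sub, hC₀card⟩ := hM'inf.exists_subset_card_eq n
        rw [← hc C₀ hC₀sub hC₀card]
        exact hhyp C₀ (fun x hx => hM'sub (hC₀sub hx)) hC₀card
      exact ⟨a, M', c, ha, hM'sub, hM'inf, hcK₀, hc⟩
    choose aF MF cF h1 h2 h3 h4 h5 using key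
    -- iterate
    let F : ℕ → {M : Set ℕ // M ⊆ S ∧ M.Infinite} := fun k =>
      Nat.rec ⟨S, subset_rfl, hS⟩
        (fun _ q => ⟨MF q.1 q.2.1 q.2.2,
          ((h2 q.1 q.2.1 q.2.2).trans (Set.diff_subset)).trans q.2.1,
          h3 q.1 q.2.1 q.2.2⟩) k
    let A : ℕ → ℕ := fun k => aF (F k).1 (F k).2.1 (F k).2.2
    let Cc : ℕ → Finset ℕ := fun k => cF (F k).1 (F k).2.1 (F k).2.2
    have hFsucc : ∀ k, (F (k+1)).1 = MF (F k).1 (F k).2.1 (F k).2.2 := fun k => rfl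
    have hAmem : ∀ k, A k ∈ (F k).1 := fun k => h1 _ _ _
    have hFsub : ∀ k, (F (k+1)).1 ⊆ (F k).1 \ {A k} := fun k => h2 _ _ _
    have hCK : ∀ k, Cc k ∈ K₀ := fun k => h4 _ _ _
    have hhom : ∀ k, ∀ C : Finset ℕ, ↑C ⊆ (F (k+1)).1 → C.card = n → χ (insert (A k) C) = Cc k :=
      fun k => h5 _ _ _
    have hchain : ∀ k l, k ≤ l → (F l).1 ⊆ (F k).1 := by
      intro k l hkl
      induction l with
      | zero => cases Nat.le_zero.mp hkl; exact subset_rfl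
      | succ l ihl =>
        rcases Nat.lt_or_ge k (l+1) with h | h
        · exact ((hFsub l).trans Set.diff_subset).trans (ihl (Nat.lt_succ_iff.mp h))
        · have : k = l + 1 := le_antisymm hkl h
          subst this; exact subset_rfl
    have hmemlater : ∀ k l, k < l → A l ∈ (F (k+1)).1 := by
      intro k l hkl
      exact hchain (k+1) l hkl (hAmem l)
    have hAinj : Function.Injective A := by
      intro k l hkl
      by_contra hne
      rcases Nat.lt_or_ge k l with h | h
      · have := hFsub k (hmemlater k l h)
        simp [hkl] at this
      · have hlk : l < k := lt_of_le_of_ne h (Ne.symm hne)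
        have := hFsub l (hmemlater l k hlk)
        simp [hkl] at this
    -- pigeonhole on colors
    have : ∃ c : ↥K₀, ({k | (⟨Cc k, hCK k⟩ : ↥K₀) = c}).Infinite := by
      obtain ⟨c, hc⟩ := Finite.exists_infinite_fiber (fun k => (⟨Cc k, hCK k⟩ : ↥K₀))
      exact ⟨c, Set.infinite_coe_iff.mp hc⟩
    obtain ⟨⟨c, hcK⟩, hfib⟩ := this
    have hfib' : {k | Cc k = c}.Infinite := by
      apply Set.Infinite.mono _ hfib
      intro k hk
      simpa using congrArg Subtype.val hk
    refine ⟨A '' {k | Cc k = c}, ?_, ?_, c, ?_⟩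
    · rintro x ⟨k, _, rfl⟩
      exact (F k).2.1 (hAmem k)
    · exact hfib'.image (Set.injOn_of_injective hAinj)
    · intro C hCsub hCcard
      -- pick index function
      have hidx : ∀ x ∈ C, ∃ k, Cc k = c ∧ A k = x := by
        intro x hx
        obtain ⟨k, hk, rfl⟩ := hCsub hx
        exact ⟨k, hk, rfl⟩
      choose idx hidx1 hidx2 using hidx
      have hCne : C.Nonempty := by
        rw [← Finset.card_pos, hCcard]; omega
      set I : Finset ℕ := C.attach.image (fun x => idx x.1 x.2) with hI
      have hIne : I.Nonempty := hCne.attach.image _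
      set k₀ := I.min' hIne with hk₀
      obtain ⟨⟨x₀, hx₀C⟩, _, hx₀idx⟩ := Finset.mem_image.mp (I.min'_mem hIne)
      have hk₀eq : k₀ = idx x₀ hx₀C := by rw [hk₀, ← hx₀idx]
      have hx₀ : A k₀ = x₀ := by rw [hk₀eq]; exact hidx2 x₀ hx₀C
      have hrest : ↑(C.erase x₀) ⊆ (F (k₀+1)).1 := by
        intro x hx
        simp only [Finset.coe_erase, Set.mem_diff, Set.mem_singleton_iff, Finset.mem_coe] at hx
        obtain ⟨hxC, hxne⟩ := hx
        have hkx : idx x hxC ∈ I := Finset.mem_image.mpr ⟨⟨x, hxC⟩, Finset.mem_attach _ _, rfl⟩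
        have hge : k₀ ≤ idx x hxC := I.min'_le _ hkx
        have hne : idx x hxC ≠ k₀ := by
          intro he
          apply hxne
          rw [← hidx2 x hxC, he, hx₀]
        have hlt : k₀ < idx x hxC := lt_of_le_of_ne hge (Ne.symm hne)
        rw [← hidx2 x hxC]
        exact hmemlater k₀ _ hlt
      have hx₀notmem : x₀ ∉ C.erase x₀ := Finset.notMem_erase _ _
      have hcard : (C.erase x₀).card = n := by
        rw [Finset.card_erase_of_mem hx₀C, hCcard]
        omega
      have := hhom k₀ (C.erase x₀) hrest hcard
      rw [hx₀, Finset.insert_erase hx₀C] at this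
      rw [this, hk₀eq]
      exact hidx1 x₀ hx₀C


lemma eq_of_inter_card (P : ℕ) (X T : Finset ℕ) (hX : X.card = P) (hT : T.card = P)
    (h : ∀ m, m < P → (X ∩ T).card ≠ m) : X = T := by
  have h1 : (X ∩ T).card ≤ P := le_trans (Finset.card_le_card Finset.inter_subset_left) (le_of_eq hX)
  have h2 : (X ∩ T).card = P := by
    by_contra hne
    exact h _ (lt_of_le_of_ne h1 hne) rfl
  have h3 : X ∩ T = X := Finset.eq_of_subset_of_card_le Finset.inter_subset_left (by rw [hX, h2])
  have hXT : X ⊆ T := by rw [← h3]; exact Finset.inter_subset_right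
  exact Finset.eq_of_subset_of_card_le hXT (by rw [hX, hT])

lemma exists_aux (M : Set ℕ) (hM : M.Infinite) (B B' : Finset ℕ) (hB'B : B' ⊆ B)
    (hB'M : ↑B' ⊆ M) (s : ℕ) (hs : B'.card ≤ s) :
    ∃ C : Finset ℕ, ↑C ⊆ M ∧ C.card = s ∧ C ∩ B = B' := by
  obtain ⟨D, hDsub, hDcard⟩ := (hM.diff B.finite_toSet).exists_subset_card_eq (s - B'.card)
  have hDB : ∀ x ∈ D, x ∉ B := by
    intro x hx hxB
    exact (hDsub hx).2 (by simpa using hxB)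
  have hdisj : Disjoint B' D := by
    rw [Finset.disjoint_left]
    intro x hx hxD
    exact hDB x hxD (hB'B hx)
  refine ⟨B' ∪ D, ?_, ?_, ?_⟩
  · intro x hx
    simp only [Finset.coe_union, Set.mem_union, Finset.mem_coe] at hx
    rcases hx with hx | hx
    · exact hB'M hx
    · exact (hDsub hx).1
  · rw [Finset.card_union_of_disjoint hdisj, hDcard]
    omega
  · rw [Finset.union_inter_distrib_right]
    have e1 : B' ∩ B = B' := Finset.inter_eq_left.mpr hB'B
    have e2 : D ∩ B = ∅ := by
      rw [Finset.eq_empty_iff_forall_notMem]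
      intro x hx
      rw [Finset.mem_inter] at hx
      exact hDB x hx.1 hx.2
    rw [e1, e2, Finset.union_empty]

lemma extendC (P : ℕ) (hP : 1 ≤ P) (S : Set ℕ) (f : Finset ℕ → Finset ℕ)
    (hrange : ∀ x : Finset ℕ, ↑x ⊆ S → x.card = P → (f x).card = P)
    (hK : ∀ x y : Finset ℕ, ↑x ⊆ S → ↑y ⊆ S → x.card = P → y.card = P → x ≠ y →
      (f x ∩ f y).card ≠ (x ∩ y).card)
    (M : Set ℕ) (hM : M.Infinite) (hMS : M ⊆ S) (T : Finset ℕ) (hT : T.card = P)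
    (hconst : ∀ B : Finset ℕ, ↑B ⊆ M → B.card = P → f B = T) :
    ∀ B : Finset ℕ, ↑B ⊆ S → B.card = P → f B = T := by
  classical
  suffices H : ∀ r : ℕ, ∀ B : Finset ℕ, ↑B ⊆ S → B.card = P →
      (B.filter (fun x => x ∉ M)).card = r → f B = T by
    intro B h1 h2
    exact H _ B h1 h2 rfl
  intro r
  induction r using Nat.strong_induction_on with
  | _ r ih =>
    intro B hBS hBP hr
    by_cases hr0 : r = 0
    · subst hr0
      rw [Finset.card_eq_zero, Finset.filter_eq_empty_iff] at hr
      push_neg at hr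
      exact hconst B (fun x hx => hr hx) hBP
    have hrP : r ≤ P := by
      rw [← hr, ← hBP]
      exact Finset.card_le_card (Finset.filter_subset _ _)
    apply eq_of_inter_card P _ _ (hrange B hBS hBP) hT
    intro m hm
    suffices hD : ∃ D : Finset ℕ, ↑D ⊆ S ∧ D.card = P ∧ D ≠ B ∧ (B ∩ D).card = m ∧ f D = T by
      obtain ⟨D, h1, h2, h3, h4, h5⟩ := hD
      have hk := hK B D hBS h1 hBP h2 (Ne.symm h3)
      rw [h5, h4] at hk
      exact hk
    by_cases hcase : m ≤ P - r
    · -- pick D inside M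
      set Bin := B.filter (fun x => x ∈ M) with hBin
      have hsplit : (B.filter (fun x => x ∈ M)).card + (B.filter (fun x => x ∉ M)).card = B.card := by
        have := Finset.card_filter_add_card_filter_not (s := B) (p := fun x => x ∈ M)
        simpa using this
      have hBincard : Bin.card = P - r := by
        rw [hBin]
        omega
      obtain ⟨B₀, hB₀sub, hB₀card⟩ := Finset.exists_subset_card_eq (show m ≤ Bin.card by omega)
      have hB₀B : B₀ ⊆ B := hB₀sub.trans (Finset.filter_subset _ _)
      have hB₀M : ↑B₀ ⊆ M := by
        intro x hx
        have := hB₀sub hx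
        rw [hBin, Finset.mem_filter] at this
        exact this.2
      obtain ⟨C, hCsub, hCcard, hCint⟩ := exists_aux M hM B B₀ hB₀B hB₀M P (by omega)
      refine ⟨C, hCsub.trans hMS, hCcard, ?_, ?_, hconst C hCsub hCcard⟩
      · intro hCB
        rw [hCB] at hCsub
        have : (B.filter (fun x => x ∉ M)) = ∅ := by
          rw [Finset.filter_eq_empty_iff]
          intro x hx
          push_neg
          exact hCsub hx
        rw [this] at hr
        simp at hr
        omega
      · rw [Finset.inter_comm, hCint, hB₀card]
    · -- swap case
      push_neg at hcase
      set j := P - m with hj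
      have hj1 : 1 ≤ j := by omega
      have hjr : j < r := by omega
      set out := B.filter (fun x => x ∉ M) with hout
      obtain ⟨J, hJsub, hJcard⟩ := Finset.exists_subset_card_eq (show j ≤ out.card by omega)
      have hJB : J ⊆ B := hJsub.trans (Finset.filter_subset _ _)
      obtain ⟨D', hD'sub, hD'card⟩ := (hM.diff B.finite_toSet).exists_subset_card_eq j
      have hD'B : ∀ x ∈ D', x ∉ B := by
        intro x hx hxB
        exact (hD'sub hx).2 (by simpa using hxB)
      have hD'M : ∀ x ∈ D', x ∈ M := fun x hx => (hD'sub hx).1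
      set B'' := (B \ J) ∪ D' with hB''
      have hdisj : Disjoint (B \ J) D' := by
        rw [Finset.disjoint_left]
        intro x hx hxD
        exact hD'B x hxD (Finset.mem_sdiff.mp hx).1
      have hB''card : B''.card = P := by
        rw [hB'', Finset.card_union_of_disjoint hdisj, Finset.card_sdiff_of_subset hJB, hD'card, hBP, hJcard]
        omega
      have hB''S : ↑B'' ⊆ S := by
        intro x hx
        simp only [hB'', Finset.coe_union, Set.mem_union, Finset.mem_coe, Finset.mem_sdiff] at hx
        rcases hx with ⟨hx, _⟩ | hx
        · exact hBS hx
        · exact hMS (hD'M x hx)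
      have hfilter : B''.filter (fun x => x ∉ M) = out \ J := by
        rw [hB'', Finset.filter_union]
        have e1 : D'.filter (fun x => x ∉ M) = ∅ := by
          rw [Finset.filter_eq_empty_iff]
          intro x hx
          push_neg
          exact hD'M x hx
        have e2 : (B \ J).filter (fun x => x ∉ M) = out \ J := by
          ext x
          simp only [Finset.mem_filter, Finset.mem_sdiff, hout]
          tauto
        rw [e1, e2, Finset.union_empty]
      have hB''r : (B''.filter (fun x => x ∉ M)).card = r - j := by
        rw [hfilter, Finset.card_sdiff_of_subset hJsub, hJcard, hout, hr]
      have hfB'' : f B'' = T := ih (r - j) (by omega) B'' hB''S hB''card hB''r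
      have hBB'' : B ∩ B'' = B \ J := by
        rw [hB'', Finset.inter_union_distrib_left]
        have e1 : B ∩ (B \ J) = B \ J := Finset.inter_eq_right.mpr (Finset.sdiff_subset)
        have e2 : B ∩ D' = ∅ := by
          rw [Finset.eq_empty_iff_forall_notMem]
          intro x hx
          rw [Finset.mem_inter] at hx
          exact hD'B x hx.2 hx.1
        rw [e1, e2, Finset.union_empty]
      have hBB''card : (B ∩ B'').card = m := by
        rw [hBB'', Finset.card_sdiff_of_subset hJB, hBP, hJcard]
        omega
      refine ⟨B'', hB''S, hB''card, ?_, hBB''card, hfB''⟩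
      intro hEq
      rw [hEq, Finset.inter_self, hBP] at hBB''card
      omega


theorem keythm (P : ℕ) (hP : 1 ≤ P) : ∀ (S : Set ℕ), S.Infinite →
    ∀ f : Finset ℕ → Finset ℕ,
    (∀ x : Finset ℕ, ↑x ⊆ S → x.card = P → (f x).card = P) →
    (∀ x y : Finset ℕ, ↑x ⊆ S → ↑y ⊆ S → x.card = P → y.card = P → x ≠ y →
      (f x ∩ f y).card ≠ (x ∩ y).card) →
    ∀ x y : Finset ℕ, ↑x ⊆ S → ↑y ⊆ S → x.card = P → y.card = P → f x = f y := by
  induction P, hP using Nat.le_induction with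
  | base =>
    intro S hS f hrange hK x y hxS hyS hx hy
    by_cases hxy : x = y
    · rw [hxy]
    obtain ⟨a, rfl⟩ := Finset.card_eq_one.mp hx
    obtain ⟨b, rfl⟩ := Finset.card_eq_one.mp hy
    have hab : a ≠ b := by
      intro h; exact hxy (by rw [h])
    have hint : ({a} : Finset ℕ) ∩ {b} = ∅ := by
      rw [Finset.singleton_inter_of_notMem]
      simpa using hab
    have hk := hK {a} {b} hxS hyS hx hy hxy
    rw [hint] at hk
    simp only [Finset.card_empty] at hk
    have hne : (f {a} ∩ f {b}).Nonempty := by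
      rw [Finset.nonempty_iff_ne_empty]
      intro h
      exact hk (by rw [h, Finset.card_empty])
    obtain ⟨z, hz⟩ := hne
    rw [Finset.mem_inter] at hz
    obtain ⟨u, hu⟩ := Finset.card_eq_one.mp (hrange {a} hxS hx)
    obtain ⟨v, hv⟩ := Finset.card_eq_one.mp (hrange {b} hyS hy)
    rw [hu, hv]
    rw [hu] at hz; rw [hv] at hz
    simp only [Finset.mem_singleton] at hz
    rw [← hz.1, ← hz.2]
  | succ p hp ih =>
    intro S hS f hrange hK
    suffices hconstS : ∃ T, ∀ B : Finset ℕ, ↑B ⊆ S → B.card = p + 1 → f B = T by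
      obtain ⟨T, hT⟩ := hconstS
      intro x y hxS hyS hx hy
      rw [hT x hxS hx, hT y hyS hy]
    classical
    -- disjoint blocks
    set e : ℕ → ℕ := fun n => ((hS.natEmbedding) n : ℕ) with he
    have he_inj : Function.Injective e := by
      intro a b h
      exact (hS.natEmbedding).injective (Subtype.ext h)
    have he_mem : ∀ n, e n ∈ S := fun n => ((hS.natEmbedding) n).2
    set A : ℕ → Finset ℕ := fun i => (Finset.range (p+1)).image (fun t => e (i * (p+1) + t)) with hA
    have hAcard : ∀ i, (A i).card = p + 1 := by
      intro i
      rw [hA]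
      simp only
      have hinj2 : Function.Injective (fun t => e (i * (p+1) + t)) := by
        intro a b hab
        have := he_inj hab
        omega
      rw [Finset.card_image_of_injective _ hinj2, Finset.card_range]
    have hAsub : ∀ i, ↑(A i) ⊆ S := by
      intro i x hx
      simp only [hA, Finset.coe_image, Set.mem_image, Finset.mem_coe] at hx
      obtain ⟨t, _, rfl⟩ := hx
      exact he_mem _
    have hAdisj : ∀ i j, i ≠ j → Disjoint (A i) (A j) := by
      intro i j hij
      rw [Finset.disjoint_left]
      intro x hx hx2
      simp only [hA, Finset.mem_image, Finset.mem_range] at hx hx2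
      obtain ⟨t, ht, rfl⟩ := hx
      obtain ⟨u, hu, huv⟩ := hx2
      have heq := he_inj huv
      rcases Nat.lt_or_ge i j with h | h
      · have : i * (p+1) + t < j * (p+1) + u := by
          have : (i+1) * (p+1) ≤ j * (p+1) := Nat.mul_le_mul_right _ h
          nlinarith
        omega
      · have h' : j < i := lt_of_le_of_ne h (Ne.symm hij)
        have : j * (p+1) + u < i * (p+1) + t := by
          have : (j+1) * (p+1) ≤ i * (p+1) := Nat.mul_le_mul_right _ h'
          nlinarith
        omega
    -- cover set Y
    set Y : Finset ℕ := (Finset.range (p+2)).biUnion (fun i => f (A i)) with hY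
    have hcover : ∀ B : Finset ℕ, ↑B ⊆ S → B.card = p + 1 → (f B ∩ Y).Nonempty := by
      intro B hBS hBcard
      have hex : ∃ i, i < p + 2 ∧ A i ∩ B = ∅ := by
        by_contra hcon
        push_neg at hcon
        have hne : ∀ i, i < p + 2 → (A i ∩ B).Nonempty := by
          intro i hi
          rw [Finset.nonempty_iff_ne_empty]
          exact Finset.nonempty_iff_ne_empty.mp (hcon i hi)
        set g : ℕ → ℕ := fun i => if h : i < p + 2 then (hne i h).choose else 0 with hg
        have hgmem : ∀ i ∈ Finset.range (p+2), g i ∈ B := by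
          intro i hi
          rw [Finset.mem_range] at hi
          have := (hne i hi).choose_spec
          rw [Finset.mem_inter] at this
          simp only [hg, dif_pos hi]
          exact this.2
        have hgA : ∀ i, i < p + 2 → g i ∈ A i := by
          intro i hi
          have := (hne i hi).choose_spec
          rw [Finset.mem_inter] at this
          simp only [hg, dif_pos hi]
          exact this.1
        have hinj : Set.InjOn g ↑(Finset.range (p+2)) := by
          intro i hi j hj hgij
          simp only [Finset.coe_range, Set.mem_Iio] at hi hj
          by_contra hij
          have := Finset.disjoint_left.mp (hAdisj i j hij) (hgA i hi)
          rw [hgij] at this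
          exact this (hgA j hj)
        have hle := Finset.card_le_card_of_injOn g hgmem hinj
        rw [Finset.card_range, hBcard] at hle
        omega
      obtain ⟨i, hi, hdisj⟩ := hex
      have hBA : B ≠ A i := by
        intro h
        rw [h, Finset.inter_self] at hdisj
        have := hAcard i
        rw [hdisj] at this
        simp at this
      have hk := hK B (A i) hBS (hAsub i) hBcard (hAcard i) hBA
      rw [Finset.inter_comm B (A i), hdisj] at hk
      simp only [Finset.card_empty] at hk
      have hfne : (f B ∩ f (A i)).Nonempty := by
        rw [Finset.nonempty_iff_ne_empty]
        intro h
        exact hk (by rw [h, Finset.card_empty])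
      obtain ⟨z, hz⟩ := hfne
      rw [Finset.mem_inter] at hz
      refine ⟨z, Finset.mem_inter.mpr ⟨hz.1, ?_⟩⟩
      rw [hY, Finset.mem_biUnion]
      exact ⟨i, Finset.mem_range.mpr hi, hz.2⟩
    -- choose w
    obtain ⟨w, hw⟩ := hS.nonempty
    have hS' : (S \ {w}).Infinite := hS.diff (Set.finite_singleton w)
    -- Ramsey
    obtain ⟨M, hMsub, hMinf, c₀, hc₀⟩ := myRamsey p (S \ {w}) hS'
      (fun C => f (insert w C) ∩ Y) Y.powerset
      (fun C _ _ => Finset.mem_powerset.mpr Finset.inter_subset_right)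
    have hMS : M ⊆ S := hMsub.trans Set.diff_subset
    have hwM : ∀ C : Finset ℕ, ↑C ⊆ M → w ∉ C := by
      intro C hC hwC
      have := hMsub (hC hwC)
      simp at this
    have hXsub : ∀ C : Finset ℕ, ↑C ⊆ M → ↑(insert w C) ⊆ S := by
      intro C hC x hx
      simp only [Finset.coe_insert, Set.mem_insert_iff] at hx
      rcases hx with rfl | hx
      · exact hw
      · exact hMS (hC hx)
    have hXcard : ∀ C : Finset ℕ, ↑C ⊆ M → C.card = p → (insert w C).card = p + 1 := by
      intro C hC hCc
      rw [Finset.card_insert_of_notMem (hwM C hC), hCc]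
    obtain ⟨C₁, hC₁sub, hC₁card⟩ := hMinf.exists_subset_card_eq p
    have hc₀ne : c₀.Nonempty := by
      rw [← hc₀ C₁ hC₁sub hC₁card]
      exact hcover _ (hXsub C₁ hC₁sub) (hXcard C₁ hC₁sub hC₁card)
    obtain ⟨y₀, hy₀⟩ := hc₀ne
    have hy₀mem : ∀ C : Finset ℕ, ↑C ⊆ M → C.card = p → y₀ ∈ f (insert w C) := by
      intro C h1 h2
      have : y₀ ∈ f (insert w C) ∩ Y := by
        rw [hc₀ C h1 h2]
        exact hy₀
      exact (Finset.mem_inter.mp this).1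
    -- reduced function
    set g : Finset ℕ → Finset ℕ := fun C => (f (insert w C)).erase y₀ with hgdef
    have hgrange : ∀ C : Finset ℕ, ↑C ⊆ M → C.card = p → (g C).card = p := by
      intro C h1 h2
      rw [hgdef]
      simp only
      rw [Finset.card_erase_of_mem (hy₀mem C h1 h2),
        hrange _ (hXsub C h1) (hXcard C h1 h2)]
      omega
    have hgK : ∀ C C' : Finset ℕ, ↑C ⊆ M → ↑C' ⊆ M → C.card = p → C'.card = p → C ≠ C' →
        (g C ∩ g C').card ≠ (C ∩ C').card := by
      intro C C' h1 h1' h2 h2' hne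
      have hXne : insert w C ≠ insert w C' := by
        intro h
        apply hne
        have := congrArg (fun s => Finset.erase s w) h
        simpa [Finset.erase_insert (hwM C h1), Finset.erase_insert (hwM C' h1')] using this
      have hKapp := hK (insert w C) (insert w C') (hXsub C h1) (hXsub C' h1')
        (hXcard C h1 h2) (hXcard C' h1' h2') hXne
      have hint : insert w C ∩ insert w C' = insert w (C ∩ C') := by
        ext x
        simp only [Finset.mem_inter, Finset.mem_insert]
        tauto
      have hwCC : w ∉ C ∩ C' := fun h => hwM C h1 (Finset.mem_inter.mp h).1
      have hcard1 : (insert w C ∩ insert w C').card = (C ∩ C').card + 1 := by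
        rw [hint, Finset.card_insert_of_notMem hwCC]
      have hy1 := hy₀mem C h1 h2
      have hy2 := hy₀mem C' h1' h2'
      have hginter : g C ∩ g C' = (f (insert w C) ∩ f (insert w C')).erase y₀ := by
        rw [hgdef]
        ext x
        simp only [Finset.mem_inter, Finset.mem_erase]
        tauto
      have hcard2 : (g C ∩ g C').card = (f (insert w C) ∩ f (insert w C')).card - 1 := by
        rw [hginter, Finset.card_erase_of_mem (Finset.mem_inter.mpr ⟨hy1, hy2⟩)]
      have hpos : 1 ≤ (f (insert w C) ∩ f (insert w C')).card :=
        Finset.card_pos.mpr ⟨y₀, Finset.mem_inter.mpr ⟨hy1, hy2⟩⟩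
      intro heq
      apply hKapp
      rw [hcard1]
      omega
    have hgconst := ih M hMinf g hgrange hgK
    -- T
    set T := f (insert w C₁) with hTdef
    have hTcard : T.card = p + 1 := hrange _ (hXsub C₁ hC₁sub) (hXcard C₁ hC₁sub hC₁card)
    have hfwT : ∀ C : Finset ℕ, ↑C ⊆ M → C.card = p → f (insert w C) = T := by
      intro C h1 h2
      have e1 : f (insert w C) = insert y₀ (g C) := by
        rw [hgdef]
        simp only
        rw [Finset.insert_erase (hy₀mem C h1 h2)]
      have e2 : T = insert y₀ (g C₁) := by
        rw [hTdef, hgdef]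
        simp only
        rw [Finset.insert_erase (hy₀mem C₁ hC₁sub hC₁card)]
      rw [e1, e2, hgconst C C₁ h1 hC₁sub h2 hC₁card]
    -- constancy on M
    have hconstM : ∀ B : Finset ℕ, ↑B ⊆ M → B.card = p + 1 → f B = T := by
      intro B hBM hBcard
      have hBS : ↑B ⊆ S := hBM.trans hMS
      apply eq_of_inter_card (p+1) _ _ (hrange B hBS hBcard) hTcard
      intro m hm
      obtain ⟨B₀, hB₀sub, hB₀card⟩ := Finset.exists_subset_card_eq (show m ≤ B.card by omega)
      obtain ⟨C, hCsub, hCcard, hCint⟩ := exists_aux M hMinf B B₀ hB₀sub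
        (fun x hx => hBM (hB₀sub hx)) p (by omega)
      have hwB : w ∉ B := hwM B hBM
      have hfX : f (insert w C) = T := hfwT C hCsub hCcard
      have hXneB : insert w C ≠ B := by
        intro h
        apply hwB
        rw [← h]
        exact Finset.mem_insert_self w C
      have hBint : (B ∩ insert w C).card = m := by
        have : B ∩ insert w C = B ∩ C := by
          ext x
          simp only [Finset.mem_inter, Finset.mem_insert]
          constructor
          · rintro ⟨hxB, rfl | hxC⟩
            · exact absurd hxB hwB
            · exact ⟨hxB, hxC⟩
          · rintro ⟨hxB, hxC⟩
            exact ⟨hxB, Or.inr hxC⟩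
        rw [this, Finset.inter_comm, hCint, hB₀card]
      have hk := hK B (insert w C) hBS (hXsub C hCsub) hBcard (hXcard C hCsub hCcard)
        (Ne.symm hXneB)
      rw [hfX, hBint] at hk
      exact hk
    exact ⟨T, extendC (p+1) (by omega) S f hrange hK M hMinf hMS T hTcard hconstM⟩

theorem stmt_2 (p : ℕ) (hp : 1 ≤ p)
    (f : Finset ℕ → Finset ℕ)
    (hrange : ∀ x : Finset ℕ, x.card = p → (f x).card = p)
    (hnonconst : ∃ x y : Finset ℕ, x.card = p ∧ y.card = p ∧ f x ≠ f y) :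
    ∃ x y : Finset ℕ, x.card = p ∧ y.card = p ∧ x ≠ y ∧
      (f x ∩ f y).card = (x ∩ y).card := by
  by_contra hcon
  push_neg at hcon
  obtain ⟨x, y, hx, hy, hne⟩ := hnonconst
  apply hne
  exact keythm p hp Set.univ Set.infinite_univ f (fun x _ hx => hrange x hx)
    (fun a b _ _ ha hb hab => hcon a b ha hb hab) x y (Set.subset_univ _) (Set.subset_univ _) hx hy
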